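/- arXiv:1110.6289 — 10 statements merged into one kernel-verified Lean document; each statement's English description precedes it below -/
import Mathlib

section
/- Let U : (0,∞) → ℝ be a continuous nondecreasing function, either strictly positive everywhere or strictly negative everywhere, whose right derivative U'₊ is well defined and locally bounded, and suppose limsup_{x→∞} x·U'₊(x)/|U(x)| < ∞. Then for every x₀ > 0 there exists γ ∈ ℝ, γ ≠ 0, such that U(x) ≤ U(λx) ≤ λ^γ · U(x) for all λ > 1 and all x ≥ x₀. -/
open Filter Set

/-- Lemma A.3 (Lemma `lemma:ae_u`): a continuous nondecreasing function of constant sign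
with well-defined, locally bounded right derivative and finite "asymptotic elasticity"
satisfies `U x ≤ U (λ x) ≤ λ^γ * U x` for all `λ > 1`, `x ≥ x₀`. -/
theorem stmt_0 (U U' : ℝ → ℝ)
    (hUcont : ContinuousOn U (Set.Ioi 0))
    (hUmono : ∀ ⦃x y : ℝ⦄, 0 < x → x ≤ y → U x ≤ U y)
    (hUsign : (∀ x : ℝ, 0 < x → 0 < U x) ∨ (∀ x : ℝ, 0 < x → U x < 0))
    (hUderiv : ∀ x : ℝ, 0 < x → HasDerivWithinAt U (U' x) (Set.Ioi x) x)
    (hUlocbdd : ∀ a b : ℝ, 0 < a → ∃ M : ℝ, ∀ x ∈ Set.Icc a b, |U' x| ≤ M)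
    (hAE : ∃ C : ℝ, ∀ᶠ x in atTop, x * U' x / |U x| ≤ C) :
    ∀ x₀ : ℝ, 0 < x₀ → ∃ γ : ℝ, γ ≠ 0 ∧
      ∀ lam x : ℝ, 1 < lam → x₀ ≤ x →
        U x ≤ U (lam * x) ∧ U (lam * x) ≤ lam ^ γ * U x := by
  intro x₀ hx₀
  -- the right derivative of a nondecreasing function is nonnegative
  have hU'nonneg : ∀ x : ℝ, 0 < x → 0 ≤ U' x := by
    intro x hx
    have h := hUderiv x hx
    rw [hasDerivWithinAt_iff_tendsto_slope] at h
    have hxe : Ioi x \ {x} = Ioi x := diff_singleton_eq_self (by simp)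
    rw [hxe] at h
    refine ge_of_tendsto h ?_
    filter_upwards [self_mem_nhdsWithin] with y hy
    rw [slope_def_field]
    have hy' : x < y := hy
    exact div_nonneg (sub_nonneg.2 (hUmono hx hy'.le)) (sub_nonneg.2 hy'.le)
  obtain ⟨C, hC⟩ := hAE
  rw [eventually_atTop] at hC
  obtain ⟨N, hN⟩ := hC
  set x₁ : ℝ := max N x₀ with hx₁def
  have hx₁ : x₀ ≤ x₁ := le_max_right _ _
  have hx₁0 : 0 < x₁ := lt_of_lt_of_le hx₀ hx₁
  -- sign data
  obtain ⟨s, m, hs1, habs, hpos, hm, hmle⟩ :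
      ∃ s m : ℝ, (s = 1 ∨ s = -1) ∧ (∀ y : ℝ, 0 < y → s * U y = |U y|) ∧
        (∀ y : ℝ, 0 < y → 0 < |U y|) ∧ 0 < m ∧ ∀ y ∈ Icc x₀ x₁, m ≤ |U y| := by
    rcases hUsign with h | h
    · refine ⟨1, U x₀, Or.inl rfl, fun y hy => by rw [one_mul, abs_of_pos (h y hy)],
        fun y hy => abs_pos.2 (ne_of_gt (h y hy)), h x₀ hx₀, fun y hy => ?_⟩
      have hy0 : 0 < y := lt_of_lt_of_le hx₀ hy.1
      rw [abs_of_pos (h y hy0)]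
      exact hUmono hx₀ hy.1
    · refine ⟨-1, -U x₁, Or.inr rfl, fun y hy => by rw [abs_of_neg (h y hy)]; ring,
        fun y hy => abs_pos.2 (ne_of_lt (h y hy)), by linarith [h x₁ hx₁0], fun y hy => ?_⟩
      have hy0 : 0 < y := lt_of_lt_of_le hx₀ hy.1
      rw [abs_of_neg (h y hy0)]
      linarith [hUmono hy0 hy.2]
  obtain ⟨K, hK⟩ := hUlocbdd x₀ x₁ hx₀
  have hK0 : 0 ≤ K := le_trans (abs_nonneg _) (hK x₀ ⟨le_refl _, hx₁⟩)
  set γ0 : ℝ := max (max C 1) (x₁ * K / m) with hγ0def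
  have hγ0 : 0 < γ0 := lt_of_lt_of_le one_pos (le_trans (le_max_right C 1) (le_max_left _ _))
  -- the uniform differential inequality
  have key : ∀ y : ℝ, x₀ ≤ y → y * U' y ≤ γ0 * |U y| := by
    intro y hy
    have hy0 : 0 < y := lt_of_lt_of_le hx₀ hy
    rcases le_or_gt x₁ y with h | h
    · have h1 := hN y (le_trans (le_max_left N x₀) h)
      have h2 : y * U' y ≤ C * |U y| := (div_le_iff₀ (hpos y hy0)).1 h1
      refine le_trans h2 (mul_le_mul_of_nonneg_right ?_ (abs_nonneg _))
      exact le_trans (le_max_left C 1) (le_max_left _ _)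
    · have hKy := hK y ⟨hy, h.le⟩
      have hU'le : U' y ≤ K := le_trans (le_abs_self _) hKy
      have h1 : y * U' y ≤ x₁ * K :=
        mul_le_mul h.le hU'le (hU'nonneg y hy0) hx₁0.le
      have h2 : x₁ * K = x₁ * K / m * m := (div_mul_cancel₀ _ hm.ne').symm
      refine le_trans h1 (le_trans (le_of_eq h2) ?_)
      exact mul_le_mul (le_max_right _ _) (hmle y ⟨hy, h.le⟩) hm.le hγ0.le
  set γ : ℝ := s * γ0 with hγdef
  have hγne : γ ≠ 0 := by
    rcases hs1 with h | h <;> rw [hγdef, h] <;> simp [hγ0.ne']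
  have key2 : ∀ y : ℝ, x₀ ≤ y → y * U' y ≤ γ * U y := by
    intro y hy
    have hy0 : 0 < y := lt_of_lt_of_le hx₀ hy
    have : γ * U y = γ0 * (s * U y) := by rw [hγdef]; ring
    rw [this, habs y hy0]
    exact key y hy
  refine ⟨γ, hγne, fun lam x hlam hx => ?_⟩
  have hx0 : 0 < x := lt_of_lt_of_le hx₀ hx
  have hlam0 : (0:ℝ) < lam := lt_trans one_pos hlam
  have hxle : x ≤ lam * x := le_mul_of_one_le_left hx0.le hlam.le
  refine ⟨hUmono hx0 hxle, ?_⟩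
  -- the fencing argument on [1, lam]
  set f : ℝ → ℝ := fun t => U (t * x) * t ^ (-γ) with hfdef
  set f' : ℝ → ℝ := fun t => U' (t * x) * x * t ^ (-γ) + U (t * x) * (-γ * t ^ (-γ - 1))
    with hf'def
  have hmem : ∀ t : ℝ, t ∈ Icc 1 lam → 0 < t ∧ x₀ ≤ t * x ∧ 0 < t * x := by
    intro t ht
    have ht0 : 0 < t := lt_of_lt_of_le one_pos ht.1
    have h1 : x₀ ≤ t * x := le_trans hx (le_mul_of_one_le_left hx0.le ht.1)
    exact ⟨ht0, h1, lt_of_lt_of_le hx₀ h1⟩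
  have hf : ContinuousOn f (Icc 1 lam) := by
    refine ContinuousOn.mul ?_ ?_
    · refine hUcont.comp ((continuous_id.mul continuous_const).continuousOn) ?_
      intro t ht
      exact (hmem t ht).2.2
    · refine ContinuousOn.rpow_const continuousOn_id ?_
      intro t ht
      exact Or.inl (ne_of_gt (hmem t ht).1)
  have hf' : ∀ t ∈ Ico 1 lam, HasDerivWithinAt f (f' t) (Ici t) t := by
    intro t ht
    have htm := hmem t ⟨ht.1, ht.2.le⟩
    have ht0 : 0 < t := htm.1
    have htx : 0 < t * x := htm.2.2
    have hinner : HasDerivWithinAt (fun u : ℝ => u * x) x (Ici t) t := by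
      simpa using ((hasDerivAt_id t).mul_const x).hasDerivWithinAt (s := Ici t)
    have houter : HasDerivWithinAt U (U' (t * x)) (Ici (t * x)) (t * x) :=
      (hUderiv (t * x) htx).Ici_of_Ioi
    have h1 : HasDerivWithinAt (fun u : ℝ => U (u * x)) (U' (t * x) * x) (Ici t) t :=
      houter.comp t hinner (fun u hu => mul_le_mul_of_nonneg_right hu hx0.le)
    have h2 : HasDerivWithinAt (fun u : ℝ => u ^ (-γ)) (-γ * t ^ (-γ - 1)) (Ici t) t :=
      (Real.hasDerivAt_rpow_const (Or.inl ht0.ne')).hasDerivWithinAt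
    exact h1.mul h2
  have ha : f 1 ≤ U x := by
    simp [hfdef, Real.one_rpow]
  have hbound : ∀ t ∈ Ico 1 lam, f' t ≤ 0 := by
    intro t ht
    have htm := hmem t ⟨ht.1, ht.2.le⟩
    have ht0 : 0 < t := htm.1
    have hkey := key2 (t * x) htm.2.1
    have hrp : (0:ℝ) < t ^ (-γ - 1) := Real.rpow_pos_of_pos ht0 _
    have hts : t ^ (-γ) = t * t ^ (-γ - 1) := by
      rw [show -γ = (-γ - 1) + 1 by ring, Real.rpow_add ht0, Real.rpow_one]; ring
    have heq : f' t = t ^ (-γ - 1) * (t * x * U' (t * x) - γ * U (t * x)) := by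
      rw [hf'def]; simp only []; rw [hts]; ring
    rw [heq]
    refine mul_nonpos_of_nonneg_of_nonpos hrp.le (sub_nonpos.2 ?_)
    calc t * x * U' (t * x) = (t * x) * U' (t * x) := by ring
      _ ≤ γ * U (t * x) := hkey
  have hle : f lam ≤ U x := by
    have := image_le_of_deriv_right_le_deriv_boundary hf hf' ha
      (continuousOn_const (c := U x)) (fun t _ => hasDerivWithinAt_const t _ (U x))
      ?_ ⟨hlam.le, le_refl lam⟩
    · simpa using this
    · intro t ht
      have := hbound t ht
      simpa [deriv_const] using this
  have hlp : 0 < lam ^ γ := Real.rpow_pos_of_pos hlam0 γ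
  have hfl : f lam = U (lam * x) * lam ^ (-γ) := rfl
  rw [hfl] at hle
  have h := mul_le_mul_of_nonneg_right hle hlp.le
  rw [mul_assoc, ← Real.rpow_add hlam0, neg_add_cancel, Real.rpow_zero, mul_one] at h
  linarith [h]
end

section
/- Let w be a continuous drawdown function and v₀ > 0. Then the inverse F_w := K_w^{−1} is differentiable on (v₀,∞) and for every x > v₀ its elasticity satisfies x·F_w'(x)/F_w(x) = (F_w(x) − w(F_w(x)))/F_w(x), and this quantity lies in (0, 1]. -/
open Filter Set MeasureTheory

/-- The scale function `K_w(x) = v₀ · exp(∫_{v₀}^x du/(u - w(u)))` associated with a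
drawdown function `w` and initial capital `v₀`. -/
noncomputable def Kw (w : ℝ → ℝ) (v₀ x : ℝ) : ℝ :=
  v₀ * Real.exp (∫ u in v₀..x, 1 / (u - w u))

/-- For continuous `w`, the inverse `F_w = K_w^{-1}` is differentiable on `(v₀,∞)` and
its elasticity satisfies `x F_w'(x)/F_w(x) = (F_w(x) - w(F_w(x)))/F_w(x) ∈ (0,1]`. -/
theorem stmt_8 (w : ℝ → ℝ) (α₁ : ℝ) (hα : α₁ ∈ Set.Ioo (0:ℝ) 1)
    (hwmono : ∀ ⦃x y : ℝ⦄, 0 < x → x ≤ y → w x ≤ w y)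
    (hw : ∀ x : ℝ, 0 < x → 0 < w x / x ∧ w x / x ≤ α₁)
    (hwcont : ContinuousOn w (Set.Ioi 0))
    (v₀ : ℝ) (hv₀ : 0 < v₀)
    (F : ℝ → ℝ)
    (hF : ∀ x : ℝ, v₀ ≤ x → v₀ ≤ F x ∧ Kw w v₀ (F x) = x ∧ F (Kw w v₀ x) = x) :
    ∀ x : ℝ, v₀ < x → ∃ d : ℝ, HasDerivAt F d x ∧
      x * d / F x = (F x - w (F x)) / F x ∧
      0 < (F x - w (F x)) / F x ∧ (F x - w (F x)) / F x ≤ 1 := by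
  -- basic positivity facts
  have hpos : ∀ u : ℝ, 0 < u → 0 < u - w u := by
    intro u hu
    have h1 : w u ≤ α₁ * u := by
      have := (hw u hu).2
      calc w u = w u / u * u := by field_simp
        _ ≤ α₁ * u := by nlinarith
    nlinarith [hα.2]
  have hwpos : ∀ u : ℝ, 0 < u → 0 < w u := by
    intro u hu
    nlinarith [(hw u hu).1, mul_pos (hw u hu).1 hu, div_mul_cancel₀ (w u) (ne_of_gt hu)]
  set f : ℝ → ℝ := fun u => 1 / (u - w u) with hf_def
  have hcontf : ContinuousOn f (Set.Ioi 0) := by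
    apply ContinuousOn.div continuousOn_const (continuousOn_id.sub hwcont)
    intro u hu
    exact ne_of_gt (hpos u hu)
  have hint : ∀ a b : ℝ, 0 < a → 0 < b → IntervalIntegrable f volume a b := by
    intro a b ha hb
    apply (hcontf.mono ?_).intervalIntegrable
    intro u hu
    have := hu.1
    simp only [mem_Ioi]
    rcases le_total a b with h | h
    · rw [uIcc_of_le h] at hu; linarith [hu.1]
    · rw [uIcc_of_ge h] at hu; linarith [hu.1]
  set g : ℝ → ℝ := fun x => ∫ u in v₀..x, f u with hg_def
  have hderivg : ∀ y : ℝ, 0 < y → HasDerivAt g (f y) y := by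
    intro y hy
    exact intervalIntegral.integral_hasDerivAt_right (hint v₀ y hv₀ hy)
      (hcontf.stronglyMeasurableAtFilter isOpen_Ioi y hy)
      ((hcontf.continuousAt (isOpen_Ioi.mem_nhds hy)))
  have hderivK : ∀ y : ℝ, 0 < y → HasDerivAt (Kw w v₀) (Kw w v₀ y * f y) y := by
    intro y hy
    have h1 : HasDerivAt (fun x => v₀ * Real.exp (g x)) (v₀ * Real.exp (g y) * f y) y := by
      have := ((hderivg y hy).exp).const_mul v₀
      rw [mul_assoc]; exact this
    exact h1
  have hKpos : ∀ y : ℝ, 0 < Kw w v₀ y := by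
    intro y
    unfold Kw; positivity
  -- Kw strictly monotone on Ici v₀
  have hKmono : StrictMonoOn (Kw w v₀) (Set.Ici v₀) := by
    intro a ha b hb hab
    have ha' : 0 < a := lt_of_lt_of_le hv₀ ha
    have hb' : 0 < b := lt_of_lt_of_le hv₀ hb
    have hgb := intervalIntegral.integral_add_adjacent_intervals (hint v₀ a hv₀ ha')
      (hint a b ha' hb')
    have hI : 0 < ∫ u in a..b, f u := by
      apply intervalIntegral.intervalIntegral_pos_of_pos_on (hint a b ha' hb') _ hab
      intro u hu
      have hu0 : 0 < u := lt_trans ha' hu.1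
      exact one_div_pos.mpr (hpos u hu0)
    have : g a < g b := by simp only [hg_def]; linarith
    unfold Kw
    have := Real.exp_lt_exp.mpr this
    nlinarith [Real.exp_pos (g a)]
  have hKv₀ : Kw w v₀ v₀ = v₀ := by
    unfold Kw
    simp [intervalIntegral.integral_same]
  -- F monotone on Ioi v₀
  have hFmono : MonotoneOn F (Set.Ioi v₀) := by
    intro a ha b hb hab
    by_contra h
    push_neg at h
    have hFa := hF a (le_of_lt ha)
    have hFb := hF b (le_of_lt hb)
    have := hKmono hFb.1 hFa.1 h
    rw [hFa.2.1, hFb.2.1] at this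
    linarith
  intro x hx
  have hx0 : 0 < x := lt_trans hv₀ hx
  obtain ⟨hFx₁, hFx₂, _⟩ := hF x (le_of_lt hx)
  have hFx0 : 0 < F x := lt_of_lt_of_le hv₀ hFx₁
  have hFxgt : v₀ < F x := by
    rcases lt_or_eq_of_le hFx₁ with h | h
    · exact h
    · exfalso; rw [← h, hKv₀] at hFx₂; linarith
  -- continuity of F at x
  have hFcont : ContinuousAt F x := by
    apply continuousAt_of_monotoneOn_of_image_mem_nhds hFmono (isOpen_Ioi.mem_nhds hx)
    apply Filter.mem_of_superset (isOpen_Ioi.mem_nhds hFxgt)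
    intro y hy
    have hy' : v₀ < y := hy
    have hKy : v₀ < Kw w v₀ y := by
      have h2 := hKmono (self_mem_Ici) (le_of_lt hy') hy'
      rwa [hKv₀] at h2
    exact ⟨Kw w v₀ y, hKy, (hF y (le_of_lt hy')).2.2⟩
  -- the derivative
  have hfx : f (F x) = 1 / (F x - w (F x)) := rfl
  have hd0 : F x - w (F x) > 0 := hpos _ hFx0
  have hK' : Kw w v₀ (F x) * f (F x) = x / (F x - w (F x)) := by
    rw [hFx₂, hfx]; ring
  have hne : x / (F x - w (F x)) ≠ 0 := by positivity
  have hDF : HasDerivAt F (x / (F x - w (F x)))⁻¹ x := by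
    apply HasDerivAt.of_local_left_inverse hFcont _ hne
    · filter_upwards [isOpen_Ioi.mem_nhds hx] with y hy
      exact (hF y (le_of_lt hy)).2.1
    · rw [← hK']; exact hderivK (F x) hFx0
  refine ⟨_, hDF, ?_, ?_, ?_⟩
  · rw [inv_div]
    field_simp
  · positivity
  · rw [div_le_one hFx0]
    have := hwpos (F x) hFx0
    linarith
end

section
/- Let v₀ > 0, let F : [v₀,∞) → [v₀,∞) be a continuous strictly increasing bijection that is differentiable on (v₀,∞) and satisfies x·F'(x) ≤ F(x) for all x > v₀, and let U : (0,∞) → ℝ be a continuous nondecreasing function, either strictly positive everywhere or strictly negative everywhere, with well-defined right derivative U'₊. Then limsup_{x→∞} x·(U∘F)'₊(x)/|U(F(x))| ≤ limsup_{y→∞} y·U'₊(y)/|U(y)|. -/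
open Filter Set

lemma right_deriv_nonneg {f : ℝ → ℝ} {f' x : ℝ}
    (hd : HasDerivWithinAt f f' (Set.Ioi x) x)
    (hm : ∀ z, x < z → f x ≤ f z) : 0 ≤ f' := by
  rw [hasDerivWithinAt_iff_tendsto_slope] at hd
  haveI : (nhdsWithin x (Set.Ioi x \ {x})).NeBot := by
    rw [Set.diff_singleton_eq_self (by simp)]
    exact nhdsGT_neBot x
  refine ge_of_tendsto hd ?_
  filter_upwards [self_mem_nhdsWithin] with z hz
  obtain ⟨hz1, _⟩ := hz
  have hz1 : x < z := hz1
  have : 0 ≤ f z - f x := sub_nonneg.2 (hm z hz1)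
  rw [slope_def_field]
  exact div_nonneg this (by linarith)

/-- If `F : [v₀,∞) → [v₀,∞)` is a continuous strictly increasing bijection,
differentiable on `(v₀,∞)` with elasticity `x F'(x) ≤ F(x)`, and `U` is a continuous
nondecreasing function of constant sign with right derivative `U'₊`, then
`limsup_{x→∞} x (U∘F)'₊(x)/|U(F(x))| ≤ limsup_{y→∞} y U'₊(y)/|U(y)|`
(with `(U∘F)'₊(x) = U'₊(F(x)) F'(x)`); the limsups are taken in the extended reals. -/
theorem stmt_9 (v₀ : ℝ) (hv₀ : 0 < v₀) (F F' : ℝ → ℝ)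
    (hFcont : ContinuousOn F (Set.Ici v₀))
    (hFmono : StrictMonoOn F (Set.Ici v₀))
    (hFbij : Set.BijOn F (Set.Ici v₀) (Set.Ici v₀))
    (hFderiv : ∀ x : ℝ, v₀ < x → HasDerivAt F (F' x) x)
    (hFel : ∀ x : ℝ, v₀ < x → x * F' x ≤ F x)
    (U U' : ℝ → ℝ)
    (hUcont : ContinuousOn U (Set.Ioi 0))
    (hUmono : ∀ ⦃x y : ℝ⦄, 0 < x → x ≤ y → U x ≤ U y)
    (hUsign : (∀ x : ℝ, 0 < x → 0 < U x) ∨ (∀ x : ℝ, 0 < x → U x < 0))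
    (hUderiv : ∀ x : ℝ, 0 < x → HasDerivWithinAt U (U' x) (Set.Ioi x) x) :
    Filter.limsup (fun x : ℝ => ((x * (U' (F x) * F' x) / |U (F x)| : ℝ) : EReal)) atTop ≤
      Filter.limsup (fun y : ℝ => ((y * U' y / |U y| : ℝ) : EReal)) atTop := by
  -- basic facts
  have hFmap : ∀ x, v₀ ≤ x → v₀ ≤ F x := fun x hx => hFbij.mapsTo hx
  have hF'nonneg : ∀ x, v₀ < x → 0 ≤ F' x := by
    intro x hx
    refine right_deriv_nonneg ((hFderiv x hx).hasDerivWithinAt) ?_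
    intro z hz
    exact (hFmono.monotoneOn) (le_of_lt hx) (le_of_lt (hx.trans hz)) hz.le
  have hU'nonneg : ∀ y, 0 < y → 0 ≤ U' y := by
    intro y hy
    exact right_deriv_nonneg (hUderiv y hy) fun z hz => hUmono hy hz.le
  have hUabs : ∀ y, 0 < y → 0 < |U y| := by
    intro y hy
    rcases hUsign with h | h
    · exact abs_pos.2 (ne_of_gt (h y hy))
    · exact abs_pos.2 (ne_of_lt (h y hy))
  -- F tends to atTop
  have hFtend : Tendsto F atTop atTop := by
    rw [tendsto_atTop]
    intro b
    obtain ⟨x₀, hx₀, hFx₀⟩ := hFbij.surjOn (le_max_right b v₀ : max b v₀ ∈ Set.Ici v₀)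
    filter_upwards [eventually_ge_atTop x₀] with x hx
    have : F x₀ ≤ F x := (hFmono.monotoneOn) hx₀ (le_trans hx₀ hx) hx
    calc b ≤ max b v₀ := le_max_left _ _
    _ = F x₀ := hFx₀.symm
    _ ≤ F x := this
  -- pointwise inequality
  have key : ∀ᶠ x in (atTop : Filter ℝ),
      ((x * (U' (F x) * F' x) / |U (F x)| : ℝ) : EReal) ≤
      ((F x * U' (F x) / |U (F x)| : ℝ) : EReal) := by
    filter_upwards [eventually_gt_atTop v₀] with x hx
    have hxv : v₀ ≤ x := hx.le
    have hFx : 0 < F x := lt_of_lt_of_le hv₀ (hFmap x hxv)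
    have hU' : 0 ≤ U' (F x) := hU'nonneg _ hFx
    have habs : 0 < |U (F x)| := hUabs _ hFx
    rw [EReal.coe_le_coe_iff]
    have : x * (U' (F x) * F' x) ≤ F x * U' (F x) := by calc x * (U' (F x) * F' x) = (x * F' x) * U' (F x) := by ring
      _ ≤ F x * U' (F x) := mul_le_mul_of_nonneg_right (hFel x hx) hU'
    gcongr
  refine le_trans (limsup_le_limsup key) ?_
  have heq : Filter.limsup (fun x : ℝ => ((F x * U' (F x) / |U (F x)| : ℝ) : EReal)) atTop
      = Filter.limsup (fun y : ℝ => ((y * U' y / |U y| : ℝ) : EReal)) (Filter.map F atTop) := by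
    rw [Filter.limsup, Filter.limsup, Filter.map_map]
    rfl
  rw [heq]
  exact limsup_le_limsup_of_le hFtend
end

section
/- Let w be a drawdown function with constant α₁ ∈ (0,1), v₀ > 0, and F_w := K_w^{−1}. Let U : (0,∞) → (0,∞) be nondecreasing with U(x)/x^ε → ∞ as x → ∞ for some ε > 0. Then for every δ > 0 with δ/(1−α₁) < ε one has U(F_w(x))/x^δ → ∞ as x → ∞. -/
open Filter Set MeasureTheory

/-- If the positive nondecreasing `U` dominates the power `x^ε` asymptotically,
then `U ∘ F_w` dominates `x^δ` whenever `δ/(1-α₁) < ε`. -/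
theorem stmt_10 (w : ℝ → ℝ) (α₁ : ℝ) (hα : α₁ ∈ Set.Ioo (0:ℝ) 1)
    (hwmono : ∀ ⦃x y : ℝ⦄, 0 < x → x ≤ y → w x ≤ w y)
    (hw : ∀ x : ℝ, 0 < x → 0 < w x / x ∧ w x / x ≤ α₁)
    (v₀ : ℝ) (hv₀ : 0 < v₀)
    (F : ℝ → ℝ)
    (hF : ∀ x : ℝ, v₀ ≤ x → v₀ ≤ F x ∧ Kw w v₀ (F x) = x ∧ F (Kw w v₀ x) = x)
    (U : ℝ → ℝ)
    (hUpos : ∀ x : ℝ, 0 < x → 0 < U x)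
    (hUmono : ∀ ⦃x y : ℝ⦄, 0 < x → x ≤ y → U x ≤ U y)
    (ε : ℝ) (hε : 0 < ε)
    (hU : Tendsto (fun x : ℝ => U x / x ^ ε) atTop atTop)
    (δ : ℝ) (hδ : 0 < δ) (hδε : δ / (1 - α₁) < ε) :
    Tendsto (fun x : ℝ => U (F x) / x ^ δ) atTop atTop := by
  obtain ⟨hα0, hα1⟩ := hα
  set c : ℝ := 1 - α₁ with hc_def
  have hc : (0:ℝ) < c := by simp only [hc_def]; linarith
  have hδc : δ < c * ε := by
    have := (div_lt_iff₀ hc).mp hδε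
    linarith [this]
  -- pointwise bound on the integrand
  have hsub : ∀ u : ℝ, 0 < u → c * u ≤ u - w u := by
    intro u hu
    have h := (hw u hu).2
    have hw' : w u ≤ α₁ * u := by
      have := (div_le_iff₀ hu).mp h
      linarith
    simp only [hc_def]; nlinarith
  -- Key: Kw w v₀ x ≤ v₀ * (x/v₀) ^ c⁻¹ for x ≥ v₀
  have key : ∀ x : ℝ, v₀ ≤ x → Kw w v₀ x ≤ v₀ * (x / v₀) ^ (c⁻¹ : ℝ) := by
    intro x hx
    have hI : (∫ u in v₀..x, 1 / (u - w u)) ≤ ∫ u in v₀..x, c⁻¹ * u⁻¹ := by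
      rw [intervalIntegral.integral_of_le hx, intervalIntegral.integral_of_le hx]
      apply integral_mono_of_nonneg
      · refine ae_restrict_of_forall_mem measurableSet_Ioc ?_
        intro u hu
        have hu0 : 0 < u := lt_of_le_of_lt hv₀.le hu.1
        have h1 := hsub u hu0
        have : 0 < u - w u := lt_of_lt_of_le (by positivity) h1
        positivity
      · have : IntervalIntegrable (fun u : ℝ => c⁻¹ * u⁻¹) volume v₀ x := by
          apply ContinuousOn.intervalIntegrable
          apply ContinuousOn.mul continuousOn_const
          apply ContinuousOn.inv₀ continuousOn_id
          intro u hu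
          have : u ∈ Set.Icc v₀ x := by
            rwa [Set.uIcc_of_le hx] at hu
          have : 0 < u := lt_of_lt_of_le hv₀ this.1
          exact ne_of_gt this
        exact this.1
      · refine ae_restrict_of_forall_mem measurableSet_Ioc ?_
        intro u hu
        have hu0 : 0 < u := lt_of_le_of_lt hv₀.le hu.1
        have h1 := hsub u hu0
        have hcu : 0 < c * u := by positivity
        have h2 : 0 < u - w u := lt_of_lt_of_le hcu h1
        have : 1 / (u - w u) ≤ 1 / (c * u) := one_div_le_one_div_of_le hcu h1
        calc 1 / (u - w u) ≤ 1 / (c * u) := this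
          _ = c⁻¹ * u⁻¹ := by rw [one_div, mul_inv]
    have hI2 : (∫ u in v₀..x, c⁻¹ * u⁻¹) = c⁻¹ * Real.log (x / v₀) := by
      rw [intervalIntegral.integral_const_mul, integral_inv_of_pos hv₀ (lt_of_lt_of_le hv₀ hx)]
    have hxv : 0 < x / v₀ := div_pos (lt_of_lt_of_le hv₀ hx) hv₀
    have hrw : v₀ * (x / v₀) ^ (c⁻¹ : ℝ) = v₀ * Real.exp (c⁻¹ * Real.log (x / v₀)) := by
      rw [Real.rpow_def_of_pos hxv, mul_comm (Real.log (x / v₀))]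
    rw [hrw, Kw]
    have := Real.exp_le_exp.mpr (le_trans hI (le_of_eq hI2))
    exact mul_le_mul_of_nonneg_left this hv₀.le
  -- lower bound on F
  have keyF : ∀ x : ℝ, v₀ ≤ x → v₀ * (x / v₀) ^ (c : ℝ) ≤ F x := by
    intro x hx
    obtain ⟨hFx, hKF, -⟩ := hF x hx
    have h1 : x ≤ v₀ * (F x / v₀) ^ (c⁻¹ : ℝ) := by
      have := key (F x) hFx; rwa [hKF] at this
    have h2 : x / v₀ ≤ (F x / v₀) ^ (c⁻¹ : ℝ) := (div_le_iff₀' hv₀).mpr h1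
    have hxv0 : (0:ℝ) ≤ x / v₀ := (div_pos (lt_of_lt_of_le hv₀ hx) hv₀).le
    have h3 : (x / v₀) ^ (c : ℝ) ≤ ((F x / v₀) ^ (c⁻¹ : ℝ)) ^ (c : ℝ) :=
      Real.rpow_le_rpow hxv0 h2 hc.le
    have hFv : (0:ℝ) ≤ F x / v₀ := div_nonneg (hv₀.le.trans hFx) hv₀.le
    rw [← Real.rpow_mul hFv, inv_mul_cancel₀ hc.ne', Real.rpow_one] at h3
    calc v₀ * (x / v₀) ^ (c : ℝ) ≤ v₀ * (F x / v₀) :=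
          mul_le_mul_of_nonneg_left h3 hv₀.le
      _ = F x := by field_simp
  -- the comparison function
  set φ : ℝ → ℝ := fun x => v₀ * (x / v₀) ^ (c : ℝ) with hφ_def
  have hφ_top : Tendsto φ atTop atTop := by
    apply Tendsto.const_mul_atTop hv₀
    exact (tendsto_rpow_atTop hc).comp (tendsto_id.atTop_div_const hv₀)
  have hφ_pos : ∀ x : ℝ, 0 < x → 0 < φ x := by
    intro x hx
    have : (0:ℝ) < x / v₀ := by positivity
    simp only [hφ_def]
    positivity
  -- first factor
  have T1 : Tendsto (fun x : ℝ => U (φ x) / (φ x) ^ (ε : ℝ)) atTop atTop := hU.comp hφ_top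
  -- second factor
  have T2 : Tendsto (fun x : ℝ => (φ x) ^ (ε : ℝ) / x ^ (δ : ℝ)) atTop atTop := by
    have heq : ∀ᶠ x : ℝ in atTop,
        (v₀ ^ (ε : ℝ) / v₀ ^ (c * ε)) * x ^ (c * ε - δ) = (φ x) ^ (ε : ℝ) / x ^ (δ : ℝ) := by
      filter_upwards [eventually_gt_atTop (0:ℝ)] with x hx
      have hxv : (0:ℝ) < x / v₀ := by positivity
      simp only [hφ_def]
      rw [Real.mul_rpow hv₀.le (Real.rpow_nonneg hxv.le c),
        ← Real.rpow_mul hxv.le, Real.div_rpow hx.le hv₀.le,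
        Real.rpow_sub hx]
      field_simp
    apply Tendsto.congr' heq
    apply Tendsto.const_mul_atTop (by positivity)
    exact tendsto_rpow_atTop (by linarith)
  -- product
  have Tprod : Tendsto (fun x : ℝ =>
      (U (φ x) / (φ x) ^ (ε : ℝ)) * ((φ x) ^ (ε : ℝ) / x ^ (δ : ℝ))) atTop atTop :=
    T1.atTop_mul_atTop₀ T2
  have Tφ : Tendsto (fun x : ℝ => U (φ x) / x ^ (δ : ℝ)) atTop atTop := by
    apply Tendsto.congr' _ Tprod
    filter_upwards [eventually_gt_atTop (0:ℝ)] with x hx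
    have hφx : 0 < φ x := hφ_pos x hx
    have : ((φ x) ^ (ε : ℝ)) ≠ 0 := by positivity
    field_simp
  -- final comparison
  apply tendsto_atTop_mono' atTop _ Tφ
  filter_upwards [eventually_ge_atTop v₀, eventually_gt_atTop (0:ℝ)] with x hx hx0
  have hφx : 0 < φ x := hφ_pos x hx0
  have hFx := keyF x hx
  have hUle : U (φ x) ≤ U (F x) := hUmono hφx hFx
  have hxd : (0:ℝ) < x ^ (δ : ℝ) := by positivity
  exact div_le_div_of_nonneg_right hUle hxd.le
end

section
/- Let w be a drawdown function with constant α₁ ∈ (0,1), v₀ > 0, and F_w := K_w^{−1}. Let U : (0,∞) → (−∞,0) be nondecreasing with U(x)·x^ε → 0 as x → ∞ for some ε > 0. Then U(F_w(x))·x^{ε(1−α₁)} → 0 as x → ∞. -/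
open Filter Set MeasureTheory

/-- If the negative nondecreasing `U` satisfies `U(x) x^ε → 0`, then
`U(F_w(x)) x^{ε(1-α₁)} → 0` as `x → ∞`. -/
theorem stmt_11 (w : ℝ → ℝ) (α₁ : ℝ) (hα : α₁ ∈ Set.Ioo (0:ℝ) 1)
    (hwmono : ∀ ⦃x y : ℝ⦄, 0 < x → x ≤ y → w x ≤ w y)
    (hw : ∀ x : ℝ, 0 < x → 0 < w x / x ∧ w x / x ≤ α₁)
    (v₀ : ℝ) (hv₀ : 0 < v₀)
    (F : ℝ → ℝ)
    (hF : ∀ x : ℝ, v₀ ≤ x → v₀ ≤ F x ∧ Kw w v₀ (F x) = x ∧ F (Kw w v₀ x) = x)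
    (U : ℝ → ℝ)
    (hUneg : ∀ x : ℝ, 0 < x → U x < 0)
    (hUmono : ∀ ⦃x y : ℝ⦄, 0 < x → x ≤ y → U x ≤ U y)
    (ε : ℝ) (hε : 0 < ε)
    (hU : Tendsto (fun x : ℝ => U x * x ^ ε) atTop (nhds 0)) :
    Tendsto (fun x : ℝ => U (F x) * x ^ (ε * (1 - α₁))) atTop (nhds 0) := by
  obtain ⟨hα0, hα1⟩ := hα
  set β : ℝ := 1 - α₁ with hβdef
  have hβ0 : 0 < β := by simp only [hβdef]; linarith
  set p : ℝ := ε * β with hpdef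
  have hp0 : 0 < p := mul_pos hε hβ0
  -- u - w u ≥ β u for u > 0
  have hsub : ∀ u : ℝ, 0 < u → β * u ≤ u - w u := by
    intro u hu
    have h := (hw u hu).2
    rw [div_le_iff₀ hu] at h
    nlinarith
  -- measurable extension of w
  have hWmono : Monotone (fun u : ℝ => w (max u v₀)) := by
    intro a b hab
    exact hwmono (lt_of_lt_of_le hv₀ (le_max_right a v₀)) (max_le_max hab le_rfl)
  have hWmeas : Measurable (fun u : ℝ => w (max u v₀)) := hWmono.measurable
  -- the key upper bound on Kw
  have hKwle : ∀ y : ℝ, v₀ ≤ y → Kw w v₀ y ≤ v₀ * (y / v₀) ^ (1 / β) := by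
    intro y hy
    have hIcc : ∀ u ∈ Set.Icc v₀ y, (0:ℝ) < u := fun u hu => lt_of_lt_of_le hv₀ hu.1
    have hfInt : IntervalIntegrable (fun u => 1 / (u - w u)) volume v₀ y := by
      rw [intervalIntegrable_iff_integrableOn_Ioc_of_le hy]
      have hmeas : AEStronglyMeasurable (fun u => 1 / (u - w u))
          (volume.restrict (Set.Ioc v₀ y)) := by
        have h1 : Measurable (fun u : ℝ => 1 / (u - w (max u v₀))) :=
          measurable_const.div (measurable_id.sub hWmeas)
        refine h1.aestronglyMeasurable.congr ?_
        refine (ae_restrict_iff' measurableSet_Ioc).2 (ae_of_all _ fun u hu => ?_)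
        simp only [max_eq_left hu.1.le]
      refine Integrable.mono' (integrable_const (1 / (β * v₀))) hmeas ?_
      refine (ae_restrict_iff' measurableSet_Ioc).2 (ae_of_all _ fun u hu => ?_)
      have hu0 : 0 < u := lt_trans hv₀ hu.1
      have h1 : β * v₀ ≤ u - w u := le_trans
        (mul_le_mul_of_nonneg_left hu.1.le hβ0.le) (hsub u hu0)
      have h2 : 0 < u - w u := lt_of_lt_of_le (mul_pos hβ0 hv₀) h1
      rw [Real.norm_eq_abs, abs_of_pos (by positivity)]
      exact one_div_le_one_div_of_le (mul_pos hβ0 hv₀) h1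
    have hgInt : IntervalIntegrable (fun u => 1 / β * (1 / u)) volume v₀ y := by
      apply ContinuousOn.intervalIntegrable
      apply ContinuousOn.mul continuousOn_const
      apply ContinuousOn.div continuousOn_const continuousOn_id
      intro u hu
      rw [Set.uIcc_of_le hy] at hu
      exact ne_of_gt (hIcc u hu)
    have hle : (∫ u in v₀..y, 1 / (u - w u)) ≤ ∫ u in v₀..y, 1 / β * (1 / u) := by
      apply intervalIntegral.integral_mono_on hy hfInt hgInt
      intro u hu
      have hu0 : 0 < u := hIcc u hu
      have h1 : β * u ≤ u - w u := hsub u hu0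
      rw [one_div, one_div, one_div, ← mul_inv]
      exact inv_anti₀ (mul_pos hβ0 hu0) h1
    have hval : (∫ u in v₀..y, 1 / β * (1 / u)) = 1 / β * Real.log (y / v₀) := by
      rw [intervalIntegral.integral_const_mul, integral_one_div]
      rw [Set.uIcc_of_le hy]
      intro h
      exact absurd (hIcc 0 h) (lt_irrefl 0)
    have hKexp : Kw w v₀ y ≤ v₀ * Real.exp (1 / β * Real.log (y / v₀)) := by
      unfold Kw
      apply mul_le_mul_of_nonneg_left _ hv₀.le
      exact Real.exp_le_exp.2 (le_trans hle (le_of_eq hval))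
    calc Kw w v₀ y ≤ v₀ * Real.exp (1 / β * Real.log (y / v₀)) := hKexp
      _ = v₀ * (y / v₀) ^ (1 / β) := by
          rw [Real.rpow_def_of_pos (div_pos (lt_of_lt_of_le hv₀ hy) hv₀), mul_comm (Real.log _)]
  -- lower bound on F
  have hFge : ∀ x : ℝ, v₀ ≤ x → v₀ * (x / v₀) ^ β ≤ F x := by
    intro x hx
    obtain ⟨hF1, hF2, _⟩ := hF x hx
    have hKle := hKwle (F x) hF1
    rw [hF2] at hKle
    have hx0 : 0 < x / v₀ := div_pos (lt_of_lt_of_le hv₀ hx) hv₀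
    have hFx0 : (0:ℝ) ≤ F x / v₀ := le_of_lt (div_pos (lt_of_lt_of_le hv₀ hF1) hv₀)
    have h1 : x / v₀ ≤ (F x / v₀) ^ (1 / β) := by
      rw [div_le_iff₀ hv₀]
      exact hKle.trans (le_of_eq (mul_comm _ _))
    have h2 : (x / v₀) ^ β ≤ ((F x / v₀) ^ (1 / β)) ^ β :=
      Real.rpow_le_rpow hx0.le h1 hβ0.le
    rw [← Real.rpow_mul hFx0, one_div, inv_mul_cancel₀ hβ0.ne', Real.rpow_one] at h2
    calc v₀ * (x / v₀) ^ β ≤ v₀ * (F x / v₀) := mul_le_mul_of_nonneg_left h2 hv₀.le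
      _ = F x := by field_simp
  -- G tends to atTop
  set G : ℝ → ℝ := fun x => v₀ * (x / v₀) ^ β with hGdef
  have hg : Tendsto G atTop atTop := by
    apply Tendsto.const_mul_atTop hv₀
    exact (tendsto_rpow_atTop hβ0).comp (tendsto_id.atTop_div_const hv₀)
  have h0 : Tendsto (fun x => v₀ ^ (p - ε) * (U (G x) * (G x) ^ ε)) atTop (nhds 0) := by
    have := (hU.comp hg).const_mul (v₀ ^ (p - ε))
    simpa using this
  have key : ∀ x : ℝ, v₀ ≤ x →
      v₀ ^ (p - ε) * (U (G x) * (G x) ^ ε) = U (G x) * x ^ p := by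
    intro x hx
    have hx0 : 0 < x := lt_of_lt_of_le hv₀ hx
    have hxv : 0 < x / v₀ := div_pos hx0 hv₀
    have hgx : (G x) ^ ε = v₀ ^ ε * (x ^ p / v₀ ^ p) := by
      simp only [hGdef]
      rw [Real.mul_rpow hv₀.le (Real.rpow_nonneg hxv.le _), ← Real.rpow_mul hxv.le,
        Real.div_rpow hx0.le hv₀.le, show β * ε = p from by rw [hpdef]; ring]
    have h1 : v₀ ^ (p - ε) * v₀ ^ ε = v₀ ^ p := by
      rw [← Real.rpow_add hv₀]; ring_nf
    have hvp : (0:ℝ) < v₀ ^ p := Real.rpow_pos_of_pos hv₀ p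
    rw [hgx, div_eq_mul_inv]
    calc v₀ ^ (p - ε) * (U (G x) * (v₀ ^ ε * (x ^ p * (v₀ ^ p)⁻¹)))
        = (v₀ ^ (p - ε) * v₀ ^ ε) * (v₀ ^ p)⁻¹ * (U (G x) * x ^ p) := by ring
      _ = U (G x) * x ^ p := by rw [h1, mul_inv_cancel₀ hvp.ne']; ring
  have hlow : Tendsto (fun x => U (G x) * x ^ p) atTop (nhds 0) := by
    refine h0.congr' ?_
    filter_upwards [eventually_ge_atTop v₀] with x hx
    exact key x hx
  refine tendsto_of_tendsto_of_tendsto_of_le_of_le' hlow tendsto_const_nhds ?_ ?_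
  · filter_upwards [eventually_ge_atTop v₀] with x hx
    have hx0 : 0 < x := lt_of_lt_of_le hv₀ hx
    have hGx0 : 0 < G x := mul_pos hv₀ (Real.rpow_pos_of_pos (div_pos hx0 hv₀) _)
    have hle : G x ≤ F x := hFge x hx
    have hxp : (0:ℝ) ≤ x ^ p := (Real.rpow_pos_of_pos hx0 p).le
    exact mul_le_mul_of_nonneg_right (hUmono hGx0 hle) hxp
  · filter_upwards [eventually_ge_atTop v₀] with x hx
    have hx0 : 0 < x := lt_of_lt_of_le hv₀ hx
    have hFpos : 0 < F x := lt_of_lt_of_le hv₀ (hF x hx).1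
    have hxp : (0:ℝ) < x ^ p := Real.rpow_pos_of_pos hx0 p
    exact le_of_lt (mul_neg_of_neg_of_pos (hUneg (F x) hFpos) hxp)
end

section
/- Let U : (0,∞) → (0,∞) be a nondecreasing concave function with lim_{x↓0} U(x) ≥ 0, and suppose U(x)/x^ε → ∞ as x → ∞ for some ε > 0. Then ε ≤ limsup_{x→∞} x·U'₊(x)/U(x) ≤ 1. -/
open Filter Set

/-- Pointwise bounds: for positive x, `0 ≤ U' x` and `x * U' x ≤ U x`. -/
lemma aux_pointwise (U U' : ℝ → ℝ)
    (hUconc : ConcaveOn ℝ (Set.Ioi 0) U)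
    (hUmono : ∀ ⦃x y : ℝ⦄, 0 < x → x ≤ y → U x ≤ U y)
    (L : ℝ) (hL : Tendsto U (nhdsWithin 0 (Set.Ioi 0)) (nhds L)) (hL0 : 0 ≤ L)
    (hUderiv : ∀ x : ℝ, 0 < x → HasDerivWithinAt U (U' x) (Set.Ioi x) x)
    (x : ℝ) (hx : 0 < x) : 0 ≤ U' x ∧ x * U' x ≤ U x := by
  have hxd := hUderiv x hx
  have hslope : Tendsto (slope U x) (nhdsWithin x (Set.Ioi x)) (nhds (U' x)) := by
    have := hasDerivWithinAt_iff_tendsto_slope.1 hxd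
    rwa [Set.diff_singleton_eq_self (by simp : x ∉ Set.Ioi x)] at this
  -- 0 ≤ U' x
  have h1 : 0 ≤ U' x := by
    refine ge_of_tendsto hslope ?_
    filter_upwards [self_mem_nhdsWithin] with z hz
    rw [slope_def_field]
    have : U x ≤ U z := hUmono hx (le_of_lt hz)
    have hzx : 0 < z - x := sub_pos.2 hz
    exact div_nonneg (sub_nonneg.2 this) hzx.le
  refine ⟨h1, ?_⟩
  -- for 0 < y < x : U y ≤ U x + U' x * (y - x)
  have hkey : ∀ y : ℝ, 0 < y → y < x → U y ≤ U x + U' x * (y - x) := by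
    intro y hy hyx
    have hle : U' x ≤ slope U x y := by
      refine le_of_tendsto hslope ?_
      filter_upwards [self_mem_nhdsWithin] with z hz
      refine hUconc.slope_anti (mem_Ioi.2 hx)
        ⟨mem_Ioi.2 hy, ?_⟩ ⟨mem_Ioi.2 (hx.trans hz), ?_⟩ (le_of_lt (hyx.trans hz))
      · intro h
        exact absurd (mem_singleton_iff.1 h) (ne_of_lt hyx)
      · intro h
        rw [mem_singleton_iff.1 h] at hz
        exact lt_irrefl x hz
    rw [slope_def_field] at hle
    have hyx' : y - x < 0 := sub_neg.2 hyx
    rw [le_div_iff_of_neg hyx'] at hle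
    linarith
  -- take y → 0⁺
  have htendR : Tendsto (fun y : ℝ => U x + U' x * (y - x)) (nhdsWithin 0 (Set.Ioi 0))
      (nhds (U x + U' x * (0 - x))) := by
    apply Tendsto.mono_left _ nhdsWithin_le_nhds
    have : Continuous (fun y : ℝ => U x + U' x * (y - x)) := by continuity
    simpa using this.tendsto 0
  have hLle : L ≤ U x + U' x * (0 - x) := by
    refine le_of_tendsto_of_tendsto hL htendR ?_
    filter_upwards [Ioo_mem_nhdsGT_of_mem (left_mem_Ico.2 hx)] with y hy
    exact hkey y hy.1 hy.2
  nlinarith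

/-- Growth bound coming from the differential inequality `x U' x ≤ c U x` on `[x₀, ∞)`. -/
lemma aux_growth (U U' : ℝ → ℝ)
    (hUconc : ConcaveOn ℝ (Set.Ioi 0) U)
    (hUderiv : ∀ x : ℝ, 0 < x → HasDerivWithinAt U (U' x) (Set.Ioi x) x)
    (c x₀ : ℝ) (hc : 0 < c) (hx₀ : 0 < x₀)
    (hineq : ∀ x : ℝ, x₀ ≤ x → x * U' x ≤ c * U x) :
    ∀ b : ℝ, x₀ ≤ b → U b * b ^ (-c) ≤ U x₀ * x₀ ^ (-c) := by
  intro b hb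
  have hUcont : ContinuousOn U (Set.Ioi 0) := hUconc.continuousOn isOpen_Ioi
  have key : ∀ y ∈ Icc x₀ b,
      (fun x => U x * x ^ (-c)) y ≤ (fun _ : ℝ => U x₀ * x₀ ^ (-c)) y := by
    apply image_le_of_deriv_right_le_deriv_boundary
      (f := fun x => U x * x ^ (-c))
      (f' := fun x => U' x * x ^ (-c) + U x * (-c * x ^ (-c - 1)))
      (B := fun _ : ℝ => U x₀ * x₀ ^ (-c)) (B' := fun _ => 0)
    · apply ContinuousOn.mul
      · exact hUcont.mono (fun y hy => lt_of_lt_of_le hx₀ hy.1)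
      · intro y hy
        exact (Real.continuousAt_rpow_const y (-c)
          (Or.inl (ne_of_gt (lt_of_lt_of_le hx₀ hy.1)))).continuousWithinAt
    · intro y hy
      have hy0 : 0 < y := lt_of_lt_of_le hx₀ hy.1
      have h1 : HasDerivWithinAt U (U' y) (Set.Ici y) y := (hUderiv y hy0).Ici_of_Ioi
      have h2 : HasDerivWithinAt (fun x : ℝ => x ^ (-c)) (-c * y ^ (-c - 1)) (Set.Ici y) y :=
        (Real.hasDerivAt_rpow_const (Or.inl (ne_of_gt hy0))).hasDerivWithinAt
      exact h1.mul h2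
    · exact le_refl _
    · exact continuousOn_const
    · intro y hy; exact hasDerivWithinAt_const _ _ _
    · -- derivative nonpositive
      intro y hy
      have hy0 : 0 < y := lt_of_lt_of_le hx₀ hy.1
      have h := hineq y hy.1
      have hrp : (0:ℝ) < y ^ (-c) := Real.rpow_pos_of_pos hy0 _
      have hsplit : y ^ (-c - 1) = y ^ (-c) * y⁻¹ := by
        rw [show (-c - 1 : ℝ) = -c + (-1) by ring, Real.rpow_add hy0, Real.rpow_neg_one]
      have hmain : U' y * y ^ (-c) ≤ c * U y * y ^ (-c - 1) := by
        rw [hsplit]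
        have h2 : U' y ≤ c * U y * y⁻¹ := by
          have h3 : U' y * y ≤ c * U y := by linarith [h]; 
          calc U' y = U' y * y * y⁻¹ := by field_simp
          _ ≤ c * U y * y⁻¹ := mul_le_mul_of_nonneg_right h3 (le_of_lt (inv_pos.2 hy0))
        calc U' y * y ^ (-c) ≤ (c * U y * y⁻¹) * y ^ (-c) :=
              mul_le_mul_of_nonneg_right h2 (le_of_lt hrp)
        _ = c * U y * (y ^ (-c) * y⁻¹) := by ring
      show U' y * y ^ (-c) + U y * (-c * y ^ (-c - 1)) ≤ 0
      nlinarith [hmain]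
  exact key b ⟨hb, le_refl b⟩

/-- For a positive nondecreasing concave `U` with `lim_{x↓0} U(x) ≥ 0` which dominates
some power `x^ε`, the asymptotic elasticity satisfies
`ε ≤ limsup_{x→∞} x U'₊(x)/U(x) ≤ 1`. -/
theorem stmt_12 (U U' : ℝ → ℝ)
    (hUconc : ConcaveOn ℝ (Set.Ioi 0) U)
    (hUmono : ∀ ⦃x y : ℝ⦄, 0 < x → x ≤ y → U x ≤ U y)
    (hUpos : ∀ x : ℝ, 0 < x → 0 < U x)
    (L : ℝ) (hL : Tendsto U (nhdsWithin 0 (Set.Ioi 0)) (nhds L)) (hL0 : 0 ≤ L)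
    (hUderiv : ∀ x : ℝ, 0 < x → HasDerivWithinAt U (U' x) (Set.Ioi x) x)
    (ε : ℝ) (hε : 0 < ε)
    (hgrow : Tendsto (fun x : ℝ => U x / x ^ ε) atTop atTop) :
    ε ≤ Filter.limsup (fun x : ℝ => x * U' x / U x) atTop ∧
      Filter.limsup (fun x : ℝ => x * U' x / U x) atTop ≤ 1 := by
  set f : ℝ → ℝ := fun x => x * U' x / U x with hf
  have hpt : ∀ x : ℝ, 0 < x → 0 ≤ f x ∧ f x ≤ 1 := by
    intro x hx
    obtain ⟨h1, h2⟩ := aux_pointwise U U' hUconc hUmono L hL hL0 hUderiv x hx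
    constructor
    · apply div_nonneg _ (le_of_lt (hUpos x hx))
      positivity
    · rw [hf]
      simp only
      rw [div_le_one (hUpos x hx)]
      exact h2
  have hev1 : ∀ᶠ x in atTop, f x ≤ 1 := by
    filter_upwards [eventually_gt_atTop 0] with x hx using (hpt x hx).2
  have hev0 : ∀ᶠ x in atTop, (0:ℝ) ≤ f x := by
    filter_upwards [eventually_gt_atTop 0] with x hx using (hpt x hx).1
  have hbdd : IsBoundedUnder (· ≤ ·) atTop f := isBoundedUnder_of_eventually_le hev1
  have hcob : IsCoboundedUnder (· ≤ ·) atTop f :=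
    (isBoundedUnder_of_eventually_ge hev0).isCoboundedUnder_le
  have hub : Filter.limsup f atTop ≤ 1 := limsup_le_of_le hcob hev1
  refine ⟨?_, hub⟩
  by_contra hcon
  push_neg at hcon
  set l := Filter.limsup f atTop with hl
  set c : ℝ := (max l 0 + ε) / 2 with hcdef
  have hmax : max l 0 < ε := max_lt hcon hε
  have hc0 : 0 < c := by
    have : (0:ℝ) ≤ max l 0 := le_max_right _ _
    rw [hcdef]; linarith
  have hcε : c < ε := by rw [hcdef]; linarith
  have hlc : l < c := by
    have : l ≤ max l 0 := le_max_left _ _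
    rw [hcdef]; linarith
  have hevc : ∀ᶠ x in atTop, f x < c := eventually_lt_of_limsup_lt hlc hbdd
  obtain ⟨a, ha⟩ := eventually_atTop.1 (hevc.and (eventually_gt_atTop 0))
  set x₀ : ℝ := max a 1 with hx0def
  have hx₀pos : (0:ℝ) < x₀ := lt_of_lt_of_le one_pos (le_max_right _ _)
  have hineq : ∀ x : ℝ, x₀ ≤ x → x * U' x ≤ c * U x := by
    intro x hx
    have hax : a ≤ x := (le_max_left a 1).trans hx
    obtain ⟨hfx, hxpos⟩ := ha x hax
    have hd : x * U' x / U x < c := hfx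
    have := (div_lt_iff₀ (hUpos x hxpos)).1 hd
    linarith
  have hbound := aux_growth U U' hUconc hUderiv c x₀ hc0 hx₀pos hineq
  set K : ℝ := U x₀ * x₀ ^ (-c) with hK
  have hUb : ∀ b : ℝ, x₀ ≤ b → U b / b ^ ε ≤ K * b ^ (c - ε) := by
    intro b hb
    have hbpos : 0 < b := lt_of_lt_of_le hx₀pos hb
    have h1 := hbound b hb
    have hbc : (0:ℝ) < b ^ c := Real.rpow_pos_of_pos hbpos _
    have hbε : (0:ℝ) < b ^ ε := Real.rpow_pos_of_pos hbpos _
    have hUble : U b ≤ K * b ^ c := by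
      have h2 := mul_le_mul_of_nonneg_right h1 (le_of_lt hbc)
      rwa [mul_assoc, ← Real.rpow_add hbpos, neg_add_cancel, Real.rpow_zero, mul_one] at h2
    rw [div_le_iff₀ hbε, Real.rpow_sub hbpos]
    calc U b ≤ K * b ^ c := hUble
    _ = K * (b ^ c / b ^ ε) * b ^ ε := by field_simp
  have htend0 : Tendsto (fun b : ℝ => K * b ^ (c - ε)) atTop (nhds 0) := by
    have h0 : Tendsto (fun b : ℝ => b ^ (-(ε - c))) atTop (nhds 0) :=
      tendsto_rpow_neg_atTop (by linarith)
    have h1 := h0.const_mul K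
    rw [mul_zero] at h1
    simpa [neg_sub] using h1
  have hev_small : ∀ᶠ b in atTop, K * b ^ (c - ε) < 1 :=
    htend0.eventually (eventually_lt_nhds (by norm_num : (0:ℝ) < 1))
  have hev_big : ∀ᶠ b in atTop, (1:ℝ) ≤ U b / b ^ ε := hgrow.eventually_ge_atTop 1
  obtain ⟨b, hb1, hb2, hb3⟩ := (hev_small.and (hev_big.and (eventually_ge_atTop x₀))).exists
  have := hUb b hb3
  linarith
end

section
/- Let X : [0,∞) → ℝ be continuous and let F : ℝ → ℝ be continuously differentiable with F' ≥ 0. Then for every t ≥ 0 the Azéma–Yor process satisfies sup_{u ∈ [0,t]} M^F_u(X) = F(X̄_t), where X̄_t = sup_{u ∈ [0,t]} X_u. -/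
open Filter Set

/-- Running supremum `X̄_t = sup_{u ∈ [0,t]} X_u` of a path `X`. -/
noncomputable def runSup (X : ℝ → ℝ) (t : ℝ) : ℝ := sSup (X '' Set.Icc 0 t)

/-- Azéma–Yor process `M^F_t(X) = F(X̄_t) - F'(X̄_t)(X̄_t - X_t)`. -/
noncomputable def AY (F F' X : ℝ → ℝ) (t : ℝ) : ℝ :=
  F (runSup X t) - F' (runSup X t) * (runSup X t - X t)

/-- If `F' ≥ 0` then the running supremum of the Azéma–Yor process `M^F(X)` is
`F(X̄_t)`. -/
theorem stmt_13 (X F F' : ℝ → ℝ)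
    (hX : ContinuousOn X (Set.Ici 0))
    (hF : ∀ x : ℝ, HasDerivAt F (F' x) x)
    (hF'cont : Continuous F')
    (hF'nonneg : ∀ x : ℝ, 0 ≤ F' x) :
    ∀ t : ℝ, 0 ≤ t → sSup (AY F F' X '' Set.Icc 0 t) = F (runSup X t) := by
  intro t ht
  have hsub : Set.Icc (0:ℝ) t ⊆ Set.Ici 0 := fun x hx => hx.1
  have hXc : ContinuousOn X (Set.Icc 0 t) := hX.mono hsub
  have hne : (Set.Icc (0:ℝ) t).Nonempty := ⟨0, le_refl 0, ht⟩
  obtain ⟨u, hu, hmax⟩ := isCompact_Icc.exists_isMaxOn hne hXc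
  have hFmono : Monotone F :=
    monotone_of_deriv_nonneg (fun x => (hF x).differentiableAt)
      (fun x => by rw [(hF x).deriv]; exact hF'nonneg x)
  have hbdd : ∀ s ∈ Set.Icc (0:ℝ) t, BddAbove (X '' Set.Icc 0 s) := fun s hs =>
    (isCompact_Icc.image_of_continuousOn
      (hXc.mono (Set.Icc_subset_Icc_right hs.2))).bddAbove
  have hrun_le : ∀ s ∈ Set.Icc (0:ℝ) t, runSup X s ≤ X u := by
    intro s hs
    apply csSup_le ((Set.nonempty_Icc.2 hs.1).image X)
    rintro y ⟨v, hv, rfl⟩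
    exact hmax ⟨hv.1, hv.2.trans hs.2⟩
  have hXle : ∀ s ∈ Set.Icc (0:ℝ) t, X s ≤ runSup X s := fun s hs =>
    le_csSup (hbdd s hs) ⟨s, ⟨hs.1, le_rfl⟩, rfl⟩
  have hrunu : runSup X u = X u := le_antisymm (hrun_le u hu) (hXle u hu)
  have hrunt : runSup X t = X u :=
    le_antisymm (hrun_le t ⟨ht, le_rfl⟩ : runSup X t ≤ X u)
      (le_csSup (hbdd t ⟨ht, le_rfl⟩) ⟨u, hu, rfl⟩)
  have hAYu : AY F F' X u = F (runSup X t) := by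
    simp [AY, hrunu, hrunt]
  have hub : ∀ y ∈ AY F F' X '' Set.Icc 0 t, y ≤ F (runSup X t) := by
    rintro y ⟨s, hs, rfl⟩
    have h1 : AY F F' X s ≤ F (runSup X s) := by
      have : 0 ≤ F' (runSup X s) * (runSup X s - X s) :=
        mul_nonneg (hF'nonneg _) (sub_nonneg.2 (hXle s hs))
      simp only [AY]; linarith
    have h2 : F (runSup X s) ≤ F (runSup X t) := by
      rw [hrunt]; exact hFmono (hrun_le s hs)
    exact h1.trans h2
  refine le_antisymm (csSup_le ⟨AY F F' X 0, 0, ⟨le_rfl, ht⟩, rfl⟩ hub) ?_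
  exact le_csSup ⟨F (runSup X t), hub⟩ ⟨u, hu, hAYu⟩
end

section
/- Let X : [0,∞) → ℝ be continuous and let F : ℝ → ℝ be continuously differentiable with F' > 0 everywhere, with inverse K := F^{−1}. Then for every t ≥ 0 one has M^K_t(M^F(X)) = X_t, i.e. the Azéma–Yor transform associated with K inverts the Azéma–Yor transform associated with F. -/
open Filter Set

/-- If `F' > 0` and `K = F⁻¹` (so that `K'(F(x)) = 1/F'(x)`), the Azéma–Yor transform
associated with `K` inverts the one associated with `F`: `M^K(M^F(X)) = X`. -/
theorem stmt_14 (X F F' K K' : ℝ → ℝ)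
    (hX : ContinuousOn X (Set.Ici 0))
    (hF : ∀ x : ℝ, HasDerivAt F (F' x) x)
    (hF'cont : Continuous F')
    (hF'pos : ∀ x : ℝ, 0 < F' x)
    (hKF : ∀ x : ℝ, K (F x) = x)
    (hK'F : ∀ x : ℝ, K' (F x) = 1 / F' x) :
    ∀ t : ℝ, 0 ≤ t → AY K K' (AY F F' X) t = X t := by
  have hFmono : Monotone F := by
    apply StrictMono.monotone
    apply strictMono_of_deriv_pos
    intro x
    rw [(hF x).deriv]
    exact hF'pos x
  intro t ht
  set Y := AY F F' X with hY
  have hXc : ContinuousOn X (Set.Icc 0 t) := hX.mono (Icc_subset_Ici_self)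
  -- running sups are bounded
  have hbdd : ∀ u, u ∈ Set.Icc 0 t → BddAbove (X '' Set.Icc 0 u) := by
    intro u hu
    exact (isCompact_Icc.image_of_continuousOn
      (hXc.mono (Icc_subset_Icc le_rfl hu.2))).bddAbove
  have hXle : ∀ u, u ∈ Set.Icc 0 t → X u ≤ runSup X u := by
    intro u hu
    exact le_csSup (hbdd u hu) ⟨u, ⟨hu.1, le_rfl⟩, rfl⟩
  have hRmono : ∀ u, u ∈ Set.Icc 0 t → runSup X u ≤ runSup X t := by
    intro u hu
    exact csSup_le_csSup (hbdd t ⟨ht, le_rfl⟩)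
      ((nonempty_Icc.mpr hu.1).image X)
      (image_mono (f := X) (Icc_subset_Icc le_rfl hu.2))
  set m := runSup X t with hm
  -- sup is attained
  obtain ⟨s, hs, hmax⟩ := isCompact_Icc.exists_isMaxOn (nonempty_Icc.mpr ht) hXc
  have hgreat : IsGreatest (X '' Set.Icc 0 t) (X s) :=
    ⟨⟨s, hs, rfl⟩, by rintro y ⟨u, hu, rfl⟩; exact hmax hu⟩
  have hmXs : m = X s := hgreat.csSup_eq
  have hRs : runSup X s = m := by
    refine le_antisymm (hRmono s hs) ?_
    rw [hmXs]
    exact hXle s hs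
  have hYs : Y s = F m := by
    simp [hY, AY, hRs, hmXs]
  -- Y u ≤ F m on [0,t]
  have hYle : ∀ u, u ∈ Set.Icc 0 t → Y u ≤ F m := by
    intro u hu
    have h1 : Y u ≤ F (runSup X u) := by
      have : 0 ≤ F' (runSup X u) * (runSup X u - X u) :=
        mul_nonneg (hF'pos _).le (sub_nonneg.mpr (hXle u hu))
      simp only [hY, AY]
      linarith
    exact h1.trans (hFmono (hRmono u hu))
  have hRY : runSup Y t = F m :=
    IsGreatest.csSup_eq ⟨⟨s, hs, hYs⟩, by rintro y ⟨u, hu, rfl⟩; exact hYle u hu⟩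
  have hYt : Y t = F m - F' m * (m - X t) := rfl
  have hne : F' m ≠ 0 := (hF'pos m).ne'
  simp only [AY, hRY, hKF, hK'F, hYt]
  field_simp
  ring
end

section
/- Let v₀ > 0 and let X : [0,∞) → [0,∞) be continuous with X_0 = v₀. Let F : [v₀,∞) → ℝ be continuously differentiable with F' > 0 on [v₀,∞), with inverse K := F^{−1}, and define w(y) := y − K(y)/K'(y) on the range of F. Then the Azéma–Yor process Y_t := M^F_t(X) satisfies the drawdown property Y_t ≥ w(sup_{u ∈ [0,t]} Y_u) for all t ≥ 0. -/
open Filter Set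

/-- Drawdown property of Azéma–Yor processes: for a nonnegative continuous path `X`
with `X_0 = v₀`, `F` continuously differentiable with `F' > 0` on `[v₀,∞)`, inverse
`K = F⁻¹` (with `K'(F(x)) = 1/F'(x)`) and `w(y) = y - K(y)/K'(y)`, the process
`Y = M^F(X)` satisfies `Y_t ≥ w(Ȳ_t)` for all `t ≥ 0`. -/
theorem stmt_15 (v₀ : ℝ) (hv₀ : 0 < v₀) (X F F' K K' : ℝ → ℝ)
    (hX : ContinuousOn X (Set.Ici 0))
    (hXnonneg : ∀ t : ℝ, 0 ≤ t → 0 ≤ X t)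
    (hX0 : X 0 = v₀)
    (hF : ∀ x : ℝ, v₀ ≤ x → HasDerivAt F (F' x) x)
    (hF'cont : ContinuousOn F' (Set.Ici v₀))
    (hF'pos : ∀ x : ℝ, v₀ ≤ x → 0 < F' x)
    (hKF : ∀ x : ℝ, v₀ ≤ x → K (F x) = x)
    (hK'F : ∀ x : ℝ, v₀ ≤ x → K' (F x) = 1 / F' x) :
    ∀ t : ℝ, 0 ≤ t →
      runSup (AY F F' X) t - K (runSup (AY F F' X) t) / K' (runSup (AY F F' X) t)
        ≤ AY F F' X t := by
  have hFmono : StrictMonoOn F (Set.Ici v₀) := by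
    apply strictMonoOn_of_deriv_pos (convex_Ici v₀)
      (fun x hx => ((hF x hx).continuousAt).continuousWithinAt)
    intro x hx
    rw [interior_Ici] at hx
    rw [(hF x hx.le).deriv]
    exact hF'pos x hx.le
  intro t ht
  have hbX : BddAbove (X '' Set.Icc 0 t) :=
    (isCompact_Icc.image_of_continuousOn (hX.mono (fun u hu => hu.1))).bddAbove
  have h0t : (0:ℝ) ∈ Set.Icc 0 t := ⟨le_refl 0, ht⟩
  set S := runSup X t with hS
  have h1 : ∀ u ∈ Set.Icc 0 t, X u ≤ S := fun u hu => le_csSup hbX ⟨u, hu, rfl⟩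
  have h2 : v₀ ≤ S := hX0 ▸ h1 0 h0t
  have hru : ∀ u ∈ Set.Icc 0 t, X u ≤ runSup X u ∧ v₀ ≤ runSup X u ∧ runSup X u ≤ S := by
    intro u hu
    have hsub : Set.Icc (0:ℝ) u ⊆ Set.Icc 0 t := Set.Icc_subset_Icc le_rfl hu.2
    have hb : BddAbove (X '' Set.Icc 0 u) := hbX.mono (Set.image_mono hsub)
    refine ⟨le_csSup hb ⟨u, ⟨hu.1, le_rfl⟩, rfl⟩,
      hX0 ▸ le_csSup hb ⟨0, ⟨le_rfl, hu.1⟩, rfl⟩, ?_⟩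
    exact csSup_le ⟨X u, ⟨u, ⟨hu.1, le_rfl⟩, rfl⟩⟩
      (fun y ⟨v, hv, hvy⟩ => hvy ▸ h1 v (hsub hv))
  have hAYle : ∀ u ∈ Set.Icc 0 t, AY F F' X u ≤ F S := by
    intro u hu
    obtain ⟨ha, hb', hc⟩ := hru u hu
    have hnn : 0 ≤ F' (runSup X u) * (runSup X u - X u) :=
      mul_nonneg (hF'pos _ hb').le (by linarith)
    have hFle : F (runSup X u) ≤ F S := hFmono.monotoneOn hb' (le_trans hb' hc) hc
    unfold AY; linarith
  have hmax : ∃ u ∈ Set.Icc 0 t, X u = S := by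
    obtain ⟨u, hu, hm⟩ := isCompact_Icc.exists_isMaxOn (Set.nonempty_Icc.2 ht)
      (hX.mono fun v hv => hv.1)
    exact ⟨u, hu, le_antisymm (h1 u hu)
      (csSup_le ⟨X u, u, hu, rfl⟩ (fun y ⟨v, hv, hvy⟩ => hvy ▸ hm hv))⟩
  have hAYsup : runSup (AY F F' X) t = F S := by
    obtain ⟨u, hu, hXu⟩ := hmax
    obtain ⟨ha, hb', hc⟩ := hru u hu
    have hru_eq : runSup X u = S := le_antisymm hc (hXu ▸ ha)
    have hAYu : AY F F' X u = F S := by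
      unfold AY; rw [hru_eq, hXu]; ring
    apply le_antisymm
    · exact csSup_le ⟨AY F F' X 0, 0, h0t, rfl⟩ (fun y ⟨v, hv, hvy⟩ => hvy ▸ hAYle v hv)
    · exact hAYu ▸ le_csSup ⟨F S, fun y ⟨v, hv, hvy⟩ => hvy ▸ hAYle v hv⟩ ⟨u, hu, rfl⟩
  rw [hAYsup, hKF S h2, hK'F S h2]
  have hF'S := hF'pos S h2
  have hXt := hXnonneg t ht
  have hdiv : S / (1 / F' S) = S * F' S := by field_simp
  rw [hdiv]
  unfold AY
  rw [← hS]
  nlinarith [mul_nonneg hF'S.le hXt]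
end

section
/- Let w be a drawdown function with constant α₁ ∈ (0,1), v₀ > 0, and F_w := K_w^{−1}. Then liminf_{x→∞} log F_w(x)/log x ≥ 1 − α₁. Consequently, if U : (0,∞) → ℝ is nondecreasing with liminf_{x→∞} U(x)/log x > 0, then liminf_{x→∞} U(F_w(x))/log x > 0. -/
open Filter Set MeasureTheory

lemma liminf_helper (a b : ℝ) (f : ℝ → ℝ)
    (hev : ∀ᶠ x in atTop, a + b / Real.log x ≤ f x) :
    ((a : ℝ) : EReal) ≤ Filter.liminf (fun x : ℝ => ((f x : ℝ) : EReal)) atTop := by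
  have h1 : Filter.Tendsto (fun x : ℝ => a + b / Real.log x) atTop (nhds a) := by
    have := Filter.Tendsto.div_atTop (tendsto_const_nhds (x := b)) Real.tendsto_log_atTop
    simpa using (tendsto_const_nhds (x := a)).add this
  have h2 : Filter.Tendsto (fun x : ℝ => ((a + b / Real.log x : ℝ) : EReal)) atTop
      (nhds ((a : ℝ) : EReal)) := (EReal.tendsto_coe).mpr h1
  have h3 : Filter.liminf (fun x : ℝ => ((a + b / Real.log x : ℝ) : EReal)) atTop
      = ((a:ℝ):EReal) := h2.liminf_eq
  rw [← h3]
  exact Filter.liminf_le_liminf (hev.mono fun x hx => EReal.coe_le_coe_iff.mpr hx)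

lemma integral_bound (w : ℝ → ℝ) (α₁ : ℝ) (hα : α₁ ∈ Set.Ioo (0:ℝ) 1)
    (hwmono : ∀ ⦃x y : ℝ⦄, 0 < x → x ≤ y → w x ≤ w y)
    (hw : ∀ x : ℝ, 0 < x → 0 < w x / x ∧ w x / x ≤ α₁)
    (v₀ : ℝ) (hv₀ : 0 < v₀) (y : ℝ) (hy : v₀ ≤ y) :
    (∫ u in v₀..y, 1 / (u - w u)) ≤ (Real.log y - Real.log v₀) / (1 - α₁) := by
  obtain ⟨hα0, hα1⟩ := hα
  have h1α : (0:ℝ) < 1 - α₁ := by linarith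
  have key : ∀ u ∈ Set.Icc v₀ y, (1 - α₁) * u ≤ u - w u ∧ 0 < w u := by
    intro u hu
    have hu0 : (0:ℝ) < u := lt_of_lt_of_le hv₀ hu.1
    obtain ⟨hwp, hwle⟩ := hw u hu0
    have hwu : w u ≤ α₁ * u := by rw [div_le_iff₀ hu0] at hwle; linarith
    have : 0 < w u := by have := (div_pos_iff.mp hwp); rcases this with ⟨h,_⟩|⟨_,h⟩ <;> nlinarith
    exact ⟨by nlinarith, this⟩
  have hle : ∀ u ∈ Set.Icc v₀ y, 1 / (u - w u) ≤ 1 / ((1 - α₁) * u) := by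
    intro u hu
    have hu0 : (0:ℝ) < u := lt_of_lt_of_le hv₀ hu.1
    have hpos : 0 < (1 - α₁) * u := by positivity
    exact one_div_le_one_div_of_le hpos (key u hu).1
  have hmono : Monotone (fun u : ℝ => w (max u v₀)) := by
    intro u v huv
    exact hwmono (lt_of_lt_of_le hv₀ (le_max_right u v₀)) (max_le_max huv le_rfl)
  have hmeas : Measurable (fun u : ℝ => 1 / (u - w (max u v₀))) :=
    Measurable.const_div (measurable_id.sub hmono.measurable) 1
  have hintf : IntervalIntegrable (fun u => 1 / (u - w u)) MeasureTheory.volume v₀ y := by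
    rw [intervalIntegrable_iff_integrableOn_Icc_of_le hy]
    have heq : Set.EqOn (fun u => 1 / (u - w u)) (fun u : ℝ => 1 / (u - w (max u v₀)))
        (Set.Icc v₀ y) := by
      intro u hu
      simp [max_eq_left hu.1]
    refine (MeasureTheory.IntegrableOn.congr_fun ?_ heq.symm measurableSet_Icc)
    refine MeasureTheory.Integrable.mono' (g := fun _ : ℝ => 1 / ((1 - α₁) * v₀))
      ((MeasureTheory.integrableOn_const_iff).mpr (Or.inr (by simp)))
      hmeas.aestronglyMeasurable.restrict ?_
    filter_upwards [MeasureTheory.ae_restrict_mem measurableSet_Icc] with u hu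
    have hu0 : (0:ℝ) < u := lt_of_lt_of_le hv₀ hu.1
    obtain ⟨h1, hw0⟩ := key u hu
    have hsub : 0 < u - w (max u v₀) := by
      rw [max_eq_left hu.1]; nlinarith
    have hbig : (1 - α₁) * v₀ ≤ u - w (max u v₀) := by
      rw [max_eq_left hu.1]
      calc (1 - α₁) * v₀ ≤ (1 - α₁) * u := by nlinarith [hu.1]
        _ ≤ u - w u := h1
    rw [Real.norm_eq_abs, abs_of_nonneg (by positivity)]
    exact one_div_le_one_div_of_le (by positivity) hbig
  have hintg : IntervalIntegrable (fun u : ℝ => 1 / ((1 - α₁) * u)) MeasureTheory.volume v₀ y := by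
    apply ContinuousOn.intervalIntegrable
    apply ContinuousOn.div continuousOn_const (continuousOn_const.mul continuousOn_id)
    intro u hu
    rw [Set.uIcc_of_le hy] at hu
    have : (0:ℝ) < u := lt_of_lt_of_le hv₀ hu.1
    exact (mul_pos h1α this).ne'
  have hmonoI := intervalIntegral.integral_mono_on hy hintf hintg hle
  refine hmonoI.trans (le_of_eq ?_)
  have : ∀ u : ℝ, 1 / ((1 - α₁) * u) = (1/(1-α₁)) * (1/u) := by
    intro u; rw [one_div_mul_eq_div, div_div]; ring_nf
  simp_rw [this]
  rw [intervalIntegral.integral_const_mul, integral_one_div_of_pos hv₀ (by linarith),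
    Real.log_div (by linarith) (by linarith)]
  ring

/-- `liminf_{x→∞} log F_w(x)/log x ≥ 1 - α₁`; consequently a nondecreasing `U` with
`liminf_{x→∞} U(x)/log x > 0` also satisfies `liminf_{x→∞} U(F_w(x))/log x > 0`
(liminfs taken in the extended reals). -/
theorem stmt_19 (w : ℝ → ℝ) (α₁ : ℝ) (hα : α₁ ∈ Set.Ioo (0:ℝ) 1)
    (hwmono : ∀ ⦃x y : ℝ⦄, 0 < x → x ≤ y → w x ≤ w y)
    (hw : ∀ x : ℝ, 0 < x → 0 < w x / x ∧ w x / x ≤ α₁)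
    (v₀ : ℝ) (hv₀ : 0 < v₀)
    (F : ℝ → ℝ)
    (hF : ∀ x : ℝ, v₀ ≤ x → v₀ ≤ F x ∧ Kw w v₀ (F x) = x ∧ F (Kw w v₀ x) = x) :
    ((1 - α₁ : ℝ) : EReal) ≤
        Filter.liminf (fun x : ℝ => ((Real.log (F x) / Real.log x : ℝ) : EReal)) atTop ∧
    ∀ U : ℝ → ℝ, (∀ ⦃x y : ℝ⦄, 0 < x → x ≤ y → U x ≤ U y) →
      0 < Filter.liminf (fun x : ℝ => ((U x / Real.log x : ℝ) : EReal)) atTop →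
      0 < Filter.liminf (fun x : ℝ => ((U (F x) / Real.log x : ℝ) : EReal)) atTop := by
  have hα0 : (0:ℝ) < α₁ := hα.1
  have hα1 : α₁ < 1 := hα.2
  have h1α : (0:ℝ) < 1 - α₁ := by linarith
  -- the key pointwise bound
  have main : ∀ x : ℝ, v₀ ≤ x → (1 - α₁) * Real.log x + α₁ * Real.log v₀ ≤ Real.log (F x) := by
    intro x hx
    obtain ⟨hFx, hK, _⟩ := hF x hx
    have hFx0 : (0:ℝ) < F x := lt_of_lt_of_le hv₀ hFx
    have hint := integral_bound w α₁ hα hwmono hw v₀ hv₀ (F x) hFx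
    have hxle : x ≤ v₀ * Real.exp ((Real.log (F x) - Real.log v₀) / (1 - α₁)) := by
      conv_lhs => rw [← hK]
      unfold Kw
      exact mul_le_mul_of_nonneg_left (Real.exp_le_exp.mpr hint) hv₀.le
    have hx0 : (0:ℝ) < x := lt_of_lt_of_le hv₀ hx
    have hlog : Real.log x ≤ Real.log v₀ + (Real.log (F x) - Real.log v₀) / (1 - α₁) := by
      calc Real.log x ≤ Real.log (v₀ * Real.exp ((Real.log (F x) - Real.log v₀) / (1 - α₁))) :=
            Real.log_le_log hx0 hxle
        _ = Real.log v₀ + (Real.log (F x) - Real.log v₀) / (1 - α₁) := by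
            rw [Real.log_mul (ne_of_gt hv₀) (Real.exp_ne_zero _), Real.log_exp]
    have h2 : (Real.log x - Real.log v₀) * (1 - α₁) ≤ Real.log (F x) - Real.log v₀ := by
      have := sub_le_iff_le_add'.mpr hlog
      calc (Real.log x - Real.log v₀) * (1 - α₁)
          ≤ ((Real.log (F x) - Real.log v₀) / (1 - α₁)) * (1 - α₁) := by
            apply mul_le_mul_of_nonneg_right this h1α.le
        _ = Real.log (F x) - Real.log v₀ := by field_simp
    nlinarith
  constructor
  · apply liminf_helper (1 - α₁) (α₁ * Real.log v₀)
    filter_upwards [eventually_ge_atTop (max v₀ 2)] with x hx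
    have hx2 : (2:ℝ) ≤ x := le_trans (le_max_right _ _) hx
    have hxv : v₀ ≤ x := le_trans (le_max_left _ _) hx
    have hlx : 0 < Real.log x := Real.log_pos (by linarith)
    have hm := main x hxv
    calc (1 - α₁) + α₁ * Real.log v₀ / Real.log x
        = ((1 - α₁) * Real.log x + α₁ * Real.log v₀) / Real.log x := by
          field_simp
      _ ≤ Real.log (F x) / Real.log x := by gcongr
  · intro U hU hpos
    obtain ⟨c, hc0, hc⟩ := EReal.lt_iff_exists_real_btwn.mp hpos
    have hc0' : (0:ℝ) < c := by exact_mod_cast hc0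
    have hev : ∀ᶠ x in atTop, (c:EReal) < ((U x / Real.log x : ℝ) : EReal) :=
      Filter.eventually_lt_of_lt_liminf hc
    obtain ⟨A, hA⟩ := eventually_atTop.mp (hev.and (eventually_ge_atTop 2))
    have htend : Filter.Tendsto (fun x : ℝ => (1 - α₁) * Real.log x + α₁ * Real.log v₀)
        atTop atTop :=
      tendsto_atTop_add_const_right atTop (α₁ * Real.log v₀)
        (Real.tendsto_log_atTop.const_mul_atTop h1α)
    have key : ∀ᶠ x in atTop, c * (1 - α₁) + c * (α₁ * Real.log v₀) / Real.log x
        ≤ U (F x) / Real.log x := by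
      filter_upwards [htend.eventually_ge_atTop (Real.log (max A 2)),
        eventually_ge_atTop v₀, eventually_ge_atTop 2] with x h1 h2 h3
      have hlx : 0 < Real.log x := Real.log_pos (by linarith)
      have hFx0 : (0:ℝ) < F x := lt_of_lt_of_le hv₀ (hF x h2).1
      have hm := main x h2
      have hFbig : max A 2 ≤ F x := by
        have : Real.log (max A 2) ≤ Real.log (F x) := le_trans h1 hm
        exact (Real.log_le_log_iff (lt_of_lt_of_le two_pos (le_max_right A 2)) hFx0).mp this
      obtain ⟨hUc, hF2⟩ := hA (F x) (le_trans (le_max_left A 2) hFbig)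
      have hlF : 0 < Real.log (F x) := Real.log_pos (by linarith)
      have hUc' : c * Real.log (F x) < U (F x) := by
        have := EReal.coe_lt_coe_iff.mp hUc
        calc c * Real.log (F x) < (U (F x) / Real.log (F x)) * Real.log (F x) := by
              exact mul_lt_mul_of_pos_right this hlF
          _ = U (F x) := by field_simp
      rw [le_div_iff₀ hlx]
      have e : (c * (1 - α₁) + c * (α₁ * Real.log v₀) / Real.log x) * Real.log x
          = c * ((1 - α₁) * Real.log x + α₁ * Real.log v₀) := by field_simp
      rw [e]
      nlinarith
    have := liminf_helper (c * (1 - α₁)) (c * (α₁ * Real.log v₀)) _ key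
    exact lt_of_lt_of_le (by exact_mod_cast (by positivity : (0:ℝ) < c * (1 - α₁))) this
end
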